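/- There exist constants c > 0, C > 0 and an integer N₀ such that for every integer N ≥ N₀ and all real numbers α, β, γ with 0 ≤ α ≤ 1/2, 0 ≤ β ≤ 1/2, and 1/2 ≤ γ ≤ 3/2, one has c/N² ≤ −∂L_N/∂β (α, β, γ) ≤ C/N²; that is, −∂L_N/∂β = Θ(1/N²) uniformly over this regime. -/

import Mathlib

noncomputable section

/-- `s = exp(β·e^α / (e^α + 2N − 2))`. -/
def sFun (N : ℕ) (α β : ℝ) : ℝ :=
  Real.exp (β * Real.exp α / (Real.exp α + 2 * (N : ℝ) - 2))

/-- `r = s + 2N − 1`. -/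
def rFun (N : ℕ) (α β : ℝ) : ℝ := sFun N α β + 2 * (N : ℝ) - 1

/-- The loss `L_N(α, β, γ) = γ²·(s² + 2N − 1)/r² − 2γ·s/r + 1`. -/
def Lfun (N : ℕ) (α β γ : ℝ) : ℝ :=
  γ ^ 2 * ((sFun N α β) ^ 2 + (2 * (N : ℝ) - 1)) / (rFun N α β) ^ 2 -
    2 * γ * sFun N α β / rFun N α β + 1

/-- The partial derivative `∂L_N/∂α`. -/
def dLalpha (N : ℕ) (α β γ : ℝ) : ℝ := deriv (fun x => Lfun N x β γ) α

/-- The partial derivative `∂L_N/∂β`. -/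
def dLbeta (N : ℕ) (α β γ : ℝ) : ℝ := deriv (fun x => Lfun N α x γ) β

/-- The partial derivative `∂L_N/∂γ`. -/
def dLgamma (N : ℕ) (α β γ : ℝ) : ℝ := deriv (fun x => Lfun N α β x) γ

lemma sFun_pos (N : ℕ) (α β : ℝ) : 0 < sFun N α β := Real.exp_pos _

lemma rFun_pos (N : ℕ) (hN : 2 ≤ N) (α β : ℝ) : 0 < rFun N α β := by
  have : (2:ℝ) ≤ (N:ℝ) := by exact_mod_cast hN
  have := sFun_pos N α β
  unfold rFun; linarith

lemma hasDerivAt_sFun (N : ℕ) (α β : ℝ) :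
    HasDerivAt (fun x => sFun N α x)
      (Real.exp α / (Real.exp α + 2 * (N : ℝ) - 2) * sFun N α β) β := by
  have h : (fun x => sFun N α x)
      = fun x => Real.exp (x * (Real.exp α / (Real.exp α + 2 * (N : ℝ) - 2))) := by
    funext x; unfold sFun; rw [mul_div_assoc]
  rw [h]
  have h1 : HasDerivAt (fun x : ℝ => x * (Real.exp α / (Real.exp α + 2 * (N : ℝ) - 2)))
      (Real.exp α / (Real.exp α + 2 * (N : ℝ) - 2)) β := by
    simpa using (hasDerivAt_id β).mul_const (Real.exp α / (Real.exp α + 2 * (N : ℝ) - 2))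
  have := h1.exp
  convert this using 1
  unfold sFun; rw [mul_div_assoc]; ring

lemma hasDerivAt_L (N : ℕ) (hN : 2 ≤ N) (α β γ : ℝ) :
    HasDerivAt (fun x => Lfun N α x γ)
      (2 * (Real.exp α / (Real.exp α + 2 * (N : ℝ) - 2)) * sFun N α β * (2 * (N : ℝ) - 1) * γ *
        (γ * (sFun N α β - 1) - rFun N α β) / (rFun N α β) ^ 3) β := by
  set k := Real.exp α / (Real.exp α + 2 * (N : ℝ) - 2) with hk
  set s := sFun N α β with hsdef
  have hs : HasDerivAt (fun x => sFun N α x) (k * s) β := hasDerivAt_sFun N α β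
  have hr : HasDerivAt (fun x => rFun N α x) (k * s) β := by
    have : (fun x => rFun N α x) = fun x => sFun N α x + 2 * (N : ℝ) - 1 := rfl
    rw [this]
    exact (hs.add_const _).sub_const _
  have hrne : rFun N α β ≠ 0 := (rFun_pos N hN α β).ne'
  have h1 : HasDerivAt (fun x => γ ^ 2 * ((sFun N α x) ^ 2 + (2 * (N : ℝ) - 1)))
      (γ ^ 2 * (2 * s ^ 1 * (k * s))) β := by
    have := ((hs.pow 2).add_const (2 * (N : ℝ) - 1)).const_mul (γ ^ 2)
    exact this.congr_deriv (by push_cast; ring)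
  have h2 : HasDerivAt (fun x => (rFun N α x) ^ 2) (2 * (rFun N α β) ^ 1 * (k * s)) β := by
    have := hr.pow 2
    exact this.congr_deriv (by push_cast; ring)
  have hterm1 := h1.div h2 (pow_ne_zero 2 hrne)
  have h3 : HasDerivAt (fun x => 2 * γ * sFun N α x) (2 * γ * (k * s)) β := by
    simpa [mul_assoc] using hs.const_mul (2 * γ)
  have hterm2 := h3.div hr hrne
  have hL := (hterm1.sub hterm2).add_const 1
  have heq : (fun x => Lfun N α x γ) = fun x =>
      γ ^ 2 * ((sFun N α x) ^ 2 + (2 * (N : ℝ) - 1)) / (rFun N α x) ^ 2 -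
        2 * γ * sFun N α x / rFun N α x + 1 := rfl
  rw [heq]
  refine hL.congr_deriv ?_
  have hrs : rFun N α β = s + 2 * (N : ℝ) - 1 := rfl
  have hsM : s + 2 * (N : ℝ) - 1 ≠ 0 := by rw [← hrs]; exact hrne
  rw [hrs]
  field_simp
  ring

set_option maxHeartbeats 1000000 in
/-- For all sufficiently large `N`, in the regime `0 ≤ α ≤ 1/2`, `0 ≤ β ≤ 1/2`,
`1/2 ≤ γ ≤ 3/2`, one has `c/N² ≤ −∂L_N/∂β ≤ C/N²`; that is, `−∂L_N/∂β = Θ(1/N²)`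
uniformly over this regime. -/
theorem stmt16 :
    ∃ c C : ℝ, 0 < c ∧ 0 < C ∧ ∃ N₀ : ℕ, ∀ N : ℕ, N₀ ≤ N → ∀ α β γ : ℝ,
      0 ≤ α → α ≤ 1 / 2 → 0 ≤ β → β ≤ 1 / 2 → 1 / 2 ≤ γ → γ ≤ 3 / 2 →
        c / (N : ℝ) ^ 2 ≤ -dLbeta N α β γ ∧ -dLbeta N α β γ ≤ C / (N : ℝ) ^ 2 := by
  refine ⟨1/81, 162, by norm_num, by norm_num, 3, ?_⟩
  intro N hN α β γ hα0 hα1 hβ0 hβ1 hγ0 hγ1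
  have hN2 : 2 ≤ N := by omega
  have hn : (3:ℝ) ≤ (N:ℝ) := by exact_mod_cast hN
  set n := (N:ℝ) with hndef
  set k := Real.exp α / (Real.exp α + 2 * n - 2) with hkdef
  set s := sFun N α β with hsdef
  set r := rFun N α β with hrdef
  have hd : dLbeta N α β γ = 2 * k * s * (2 * n - 1) * γ * (γ * (s - 1) - r) / r ^ 3 :=
    (hasDerivAt_L N hN2 α β γ).deriv
  have he1 : 1 ≤ Real.exp α := Real.one_le_exp hα0
  have he3 : Real.exp α ≤ 3 := by
    have h1 : Real.exp α ≤ Real.exp 1 := Real.exp_le_exp.mpr (by linarith)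
    have := Real.exp_one_lt_d9
    linarith
  have hDpos : 0 < Real.exp α + 2 * n - 2 := by linarith
  have hk0 : 0 < k := div_pos (by linarith) hDpos
  have hk1 : 1 / (3 * n) ≤ k := by
    rw [hkdef, div_le_div_iff₀ (by linarith) hDpos]
    nlinarith
  have hk2 : k ≤ 3 / n := by
    rw [hkdef, div_le_div_iff₀ hDpos (by linarith)]
    nlinarith
  have hs1 : 1 ≤ s := by
    rw [hsdef]
    unfold sFun
    rw [← hndef]
    exact Real.one_le_exp (by positivity)
  have hs3 : s ≤ 3 := by
    rw [hsdef]
    unfold sFun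
    rw [← hndef]
    have hexp : β * Real.exp α / (Real.exp α + 2 * n - 2) ≤ 1 := by
      rw [div_le_one hDpos]; nlinarith
    have h1 : Real.exp (β * Real.exp α / (Real.exp α + 2 * n - 2)) ≤ Real.exp 1 :=
      Real.exp_le_exp.mpr hexp
    have := Real.exp_one_lt_d9
    linarith
  have hrs : r = s + 2 * n - 1 := rfl
  have hr1 : 2 * n ≤ r := by rw [hrs]; linarith
  have hr3 : r ≤ 3 * n := by rw [hrs]; linarith
  have hrpos : 0 < r := by linarith
  have hE1 : n ≤ r - γ * (s - 1) := by nlinarith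
  have hE2 : r - γ * (s - 1) ≤ 3 * n := by nlinarith
  have hneg : -dLbeta N α β γ = 2 * k * s * (2 * n - 1) * γ * (r - γ * (s - 1)) / r ^ 3 := by
    rw [hd]; ring
  rw [hneg]
  clear_value n k s r
  have hnum0 : 0 ≤ 2 * k * s * (2 * n - 1) * γ * (r - γ * (s - 1)) :=
    mul_nonneg (mul_nonneg (mul_nonneg (mul_nonneg (by linarith : (0:ℝ) ≤ 2 * k)
      (by linarith : (0:ℝ) ≤ s)) (by linarith : (0:ℝ) ≤ 2 * n - 1))
      (by linarith : (0:ℝ) ≤ γ)) (by linarith : (0:ℝ) ≤ r - γ * (s - 1))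
  have hp2 : (0:ℝ) < 2 * k * s * (2 * n - 1) :=
    mul_pos (mul_pos (by linarith : (0:ℝ) < 2 * k) (by linarith : (0:ℝ) < s))
      (by linarith : (0:ℝ) < 2 * n - 1)
  have hp1 : (0:ℝ) < 2 * k * s * (2 * n - 1) * γ := mul_pos hp2 (by linarith)
  constructor
  · have hnum : n / 3 ≤ 2 * k * s * (2 * n - 1) * γ * (r - γ * (s - 1)) := by
      have heq : n / 3 = 2 * (1 / (3 * n)) * 1 * n * (1 / 2) * n := by
        field_simp
      rw [heq]
      gcongr <;> linarith
    have hrcube : r ^ 3 ≤ 27 * n ^ 3 := by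
      have h := pow_le_pow_left₀ hrpos.le hr3 3
      ring_nf at h ⊢; linarith
    calc (1/81) / n ^ 2 = (n / 3) / (27 * n ^ 3) := by
            field_simp; ring
      _ ≤ 2 * k * s * (2 * n - 1) * γ * (r - γ * (s - 1)) / r ^ 3 :=
            div_le_div₀ hnum0 hnum (by positivity) hrcube
  · have hnum : 2 * k * s * (2 * n - 1) * γ * (r - γ * (s - 1)) ≤ 162 * n := by
      have heq : (162:ℝ) * n = 2 * (3 / n) * 3 * (2 * n) * (3 / 2) * (3 * n) := by
        field_simp; ring
      rw [heq]
      gcongr <;> linarith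
    have hrcube : n ^ 3 ≤ r ^ 3 := by
      have h := pow_le_pow_left₀ (by linarith : (0:ℝ) ≤ n) (by linarith : n ≤ r) 3
      linarith
    calc 2 * k * s * (2 * n - 1) * γ * (r - γ * (s - 1)) / r ^ 3
        ≤ 162 * n / n ^ 3 := div_le_div₀ (by positivity) hnum (by positivity) hrcube
      _ = 162 / n ^ 2 := by field_simp
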